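/- Let A ∈ ℝ^{n×p}, B ∈ ℝ^{p×n}, C ∈ ℝ^{n×r} be such that rank(C) = r, (I_n − A·B)·C = 0, and either rank(A) = r or rank(B) = r. Let D ∈ ℝ^{n×m} be such that the n×(r+m) block matrix [C D] has rank r + m. Then rank((I_n − A·B)·D) = m. -/

import Mathlib

open Matrix

lemma my_ker_eq_bot_of_rank_eq_card {ι : Type*} [Fintype ι] {n : ℕ}
    (M : Matrix (Fin n) ι ℝ) (h : M.rank = Fintype.card ι) :
    LinearMap.ker M.mulVecLin = ⊥ := by
  have h1 := LinearMap.finrank_range_add_finrank_ker M.mulVecLin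
  rw [Module.finrank_fintype_fun_eq_card] at h1
  rw [Matrix.rank] at h
  have h2 : Module.finrank ℝ (LinearMap.ker M.mulVecLin) = 0 := by omega
  exact Submodule.finrank_eq_zero.mp h2

lemma my_rank_add_le {n m : ℕ} (M N : Matrix (Fin n) (Fin m) ℝ) :
    (M + N).rank ≤ M.rank + N.rank := by
  rw [Matrix.rank, Matrix.rank, Matrix.rank, Matrix.mulVecLin_add]
  have hle : LinearMap.range (M.mulVecLin + N.mulVecLin) ≤
      LinearMap.range M.mulVecLin ⊔ LinearMap.range N.mulVecLin := by
    rintro x ⟨y, rfl⟩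
    exact Submodule.add_mem_sup ⟨y, rfl⟩ ⟨y, rfl⟩
  exact (Submodule.finrank_mono hle).trans
    (Submodule.finrank_add_le_finrank_add_finrank _ _)

/-- If in addition [C  D] has rank r + m, then rank((I − AB)D) = m. -/
theorem stmt_16 {n p r m : ℕ}
    (A : Matrix (Fin n) (Fin p) ℝ) (B : Matrix (Fin p) (Fin n) ℝ)
    (C : Matrix (Fin n) (Fin r) ℝ)
    (hC : C.rank = r)
    (h : (1 - A * B) * C = 0)
    (hr : A.rank = r ∨ B.rank = r)
    (D : Matrix (Fin n) (Fin m) ℝ)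
    (hCD : (Matrix.fromCols C D).rank = r + m) :
    ((1 - A * B) * D).rank = m := by
  set P : Matrix (Fin n) (Fin n) ℝ := 1 - A * B with hP
  -- rank of AB ≤ r
  have hABrank : (A * B).rank ≤ r := by
    rcases hr with h' | h'
    · exact h' ▸ Matrix.rank_mul_le_left A B
    · exact h' ▸ Matrix.rank_mul_le_right A B
  -- rank P ≥ n - r
  have hone : (1 : Matrix (Fin n) (Fin n) ℝ) = P + A * B := by
    rw [hP, sub_add_cancel]
  have hrank1 : (1 : Matrix (Fin n) (Fin n) ℝ).rank = n := by
    simp [Matrix.rank_one]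
  have hPge : n ≤ P.rank + r := by
    have := my_rank_add_le P (A * B)
    rw [← hone, hrank1] at this
    omega
  -- range C ≤ ker P
  have hrange : LinearMap.range C.mulVecLin ≤ LinearMap.ker P.mulVecLin := by
    rintro x ⟨y, rfl⟩
    simp only [LinearMap.mem_ker]
    have : (P * C).mulVecLin y = 0 := by rw [h]; simp
    rw [Matrix.mulVecLin_mul] at this
    exact this
  -- finrank computations
  have hrn := LinearMap.finrank_range_add_finrank_ker P.mulVecLin
  rw [Module.finrank_fintype_fun_eq_card, Fintype.card_fin] at hrn
  have hCfin : Module.finrank ℝ (LinearMap.range C.mulVecLin) = r := hC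
  have hkerle : r ≤ Module.finrank ℝ (LinearMap.ker P.mulVecLin) := by
    have := Submodule.finrank_mono hrange
    omega
  have hkerfin : Module.finrank ℝ (LinearMap.ker P.mulVecLin) = r := by
    have : P.rank = Module.finrank ℝ (LinearMap.range P.mulVecLin) := rfl
    omega
  -- ker P = range C
  have hkereq : LinearMap.range C.mulVecLin = LinearMap.ker P.mulVecLin :=
    Submodule.eq_of_le_of_finrank_eq hrange (by rw [hCfin, hkerfin])
  -- injectivity of fromColumns C D
  have hCDker : LinearMap.ker (Matrix.fromCols C D).mulVecLin = ⊥ := by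
    apply my_ker_eq_bot_of_rank_eq_card
    simpa using hCD
  -- ker of (P*D).mulVecLin = ⊥
  have hker : LinearMap.ker (P * D).mulVecLin = ⊥ := by
    rw [LinearMap.ker_eq_bot']
    intro x hx
    rw [Matrix.mulVecLin_mul] at hx
    have hmem : D.mulVecLin x ∈ LinearMap.ker P.mulVecLin := hx
    rw [← hkereq] at hmem
    obtain ⟨y, hy⟩ := hmem
    have hz : (Matrix.fromCols C D).mulVecLin (Sum.elim (-y) x) = 0 := by
      simp only [Matrix.mulVecLin_apply] at *
      rw [Matrix.fromCols_mulVec_sumElim, Matrix.mulVec_neg, hy]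
      simp
    have hz0 := LinearMap.ker_eq_bot'.mp hCDker _ hz
    funext i
    exact congrFun hz0 (Sum.inr i)
  -- conclude
  have hrn2 := LinearMap.finrank_range_add_finrank_ker (P * D).mulVecLin
  rw [Module.finrank_fintype_fun_eq_card, Fintype.card_fin, hker,
    finrank_bot] at hrn2
  simpa [Matrix.rank] using hrn2
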